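/- Let y, c > 0 and let x > 0 satisfy the strict triangle inequalities |x − y| < c < x + y (so x, y, c are side lengths of a nondegenerate Euclidean triangle). Let α = arccos((x² + c² − y²)/(2xc)) ∈ (0, π) be the angle of this triangle opposite the side y. Then the function f(s) = arccos((s² + y² − c²)/(2sy)) (the angle between the sides of lengths s and y, with the third side length c held fixed) is differentiable at x with f′(x) = −cot(α)/x. -/

import Mathlib

open Real

/-- In a Euclidean triangle with side lengths `x`, `y`, `c`, the derivative of the angle
`ω = arccos ((x² + y² − c²)/(2xy))` between the sides `x` and `y`, with respect to `x`,
is `−cot α / x`, where `α = arccos ((x² + c² − y²)/(2xc))` is the angle opposite `y`. -/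
theorem angle_derivative_cone_polygon (x y c : ℝ) (hx : 0 < x) (hy : 0 < y) (hc : 0 < c)
    (h₁ : |x - y| < c) (h₂ : c < x + y) (α : ℝ)
    (hα : α = Real.arccos ((x ^ 2 + c ^ 2 - y ^ 2) / (2 * x * c))) :
    HasDerivAt (fun s => Real.arccos ((s ^ 2 + y ^ 2 - c ^ 2) / (2 * s * y)))
      (-(Real.cos α / Real.sin α) / x) x := by
  obtain ⟨h₁a, h₁b⟩ := abs_lt.mp h₁
  set u : ℝ := (x ^ 2 + y ^ 2 - c ^ 2) / (2 * x * y) with hu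
  set t : ℝ := (x ^ 2 + c ^ 2 - y ^ 2) / (2 * x * c) with ht
  set K : ℝ := 4 * x ^ 2 * y ^ 2 - (x ^ 2 + y ^ 2 - c ^ 2) ^ 2 with hKdef
  have hxy : (0:ℝ) < 2 * x * y := by positivity
  have hxc : (0:ℝ) < 2 * x * c := by positivity
  have hK : 0 < K := by
    have h3 : 0 < x + y - c := by linarith
    have h4 : 0 < x + y + c := by linarith
    have h5 : 0 < c - (x - y) := by linarith
    have h6 : 0 < c + (x - y) := by linarith
    nlinarith [mul_pos (mul_pos (mul_pos h3 h4) h5) h6]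
  have hu1 : u < 1 := by
    rw [hu, div_lt_one hxy]; nlinarith
  have hu2 : -1 < u := by
    rw [hu, lt_div_iff₀ hxy]; nlinarith
  have ht1 : t ≤ 1 := by
    rw [ht, div_le_one hxc]; nlinarith
  have ht2 : -1 ≤ t := by
    rw [ht, le_div_iff₀ hxc]; nlinarith
  -- derivative of the inner function
  have hg : HasDerivAt (fun s : ℝ => (s ^ 2 + y ^ 2 - c ^ 2) / (2 * s * y))
      ((x ^ 2 + c ^ 2 - y ^ 2) / (2 * x ^ 2 * y)) x := by
    have h1 : HasDerivAt (fun s : ℝ => s ^ 2 + y ^ 2 - c ^ 2) (2 * x) x := by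
      simpa using ((hasDerivAt_pow 2 x).add_const (y ^ 2)).sub_const (c ^ 2)
    have h2 : HasDerivAt (fun s : ℝ => 2 * s * y) (2 * y) x := by
      simpa using ((hasDerivAt_id x).const_mul 2).mul_const y
    have := h1.div h2 (by positivity)
    refine this.congr_deriv ?_
    field_simp
    ring
  have harccos : HasDerivAt Real.arccos (-(1 / Real.sqrt (1 - u ^ 2))) u :=
    Real.hasDerivAt_arccos hu2.ne' hu1.ne
  have hcomp := harccos.comp x hg
  have hsqK : Real.sqrt K ^ 2 = K := Real.sq_sqrt hK.le
  have hsK : 0 < Real.sqrt K := Real.sqrt_pos.mpr hK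
  have hdivsq : ∀ d : ℝ, (Real.sqrt K / d) ^ 2 = K / d ^ 2 := by
    intro d; rw [div_pow, hsqK]
  have h1u : 1 - u ^ 2 = (Real.sqrt K / (2 * x * y)) ^ 2 := by
    rw [hdivsq, hu, hKdef]
    field_simp
    ring
  have hsqrt1u : Real.sqrt (1 - u ^ 2) = Real.sqrt K / (2 * x * y) := by
    rw [h1u, Real.sqrt_sq (by positivity)]
  have hcos : Real.cos α = t := by rw [hα, Real.cos_arccos ht2 ht1]
  have hsin : Real.sin α = Real.sqrt K / (2 * x * c) := by
    rw [hα, Real.sin_arccos]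
    rw [show 1 - t ^ 2 = (Real.sqrt K / (2 * x * c)) ^ 2 by
      rw [hdivsq, ht, hKdef]; field_simp; ring]
    exact Real.sqrt_sq (by positivity)
  refine hcomp.congr_deriv ?_
  rw [hcos, hsin, hsqrt1u, ht]
  field_simp
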